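/- For the birth-death chain on ℤ₊ with a_i = b_i = i^γ for i ≥ 1 (a_0 = 0, b_0 = 1) and γ > 1, the reversible probability measure π satisfies π_i = Z^{-1} i^{-γ} for i ≥ 1, and the rescaled Cheeger constant k^{(1/2)'} = inf_{0<π(A)≤1/2} J^{(1/2)}(A×Aᶜ)/π(A) is strictly positive if and only if γ ≥ 2, where J^{(1/2)}(i,j) = π_i q_{ij}/√((a_i+b_i)∨(a_j+b_j)). -/

import Mathlib

open Set ENNReal


private lemma rpow_telescope {γ : ℝ} (hγ : 1 < γ) {k : ℕ} (hk : 1 ≤ k) :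
    ((k:ℝ)) ^ (-γ) ≤ 2 ^ γ / (γ - 1) * ((k:ℝ) ^ (1-γ) - ((k:ℝ)+1) ^ (1-γ)) := by
  have hk0 : (0:ℝ) < k := by exact_mod_cast hk
  have hk1 : (1:ℝ) ≤ (k:ℝ) := by exact_mod_cast hk
  obtain ⟨c, hc, hceq⟩ := exists_hasDerivAt_eq_slope (fun x => x ^ (1-γ))
      (fun x => (1-γ) * x ^ (-γ)) (show (k:ℝ) < (k:ℝ)+1 by linarith)
      (by
        intro x hx
        have hx0 : x ≠ 0 := by
          have := hx.1; intro h; rw [h] at this; linarith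
        exact (Real.hasDerivAt_rpow_const (Or.inl hx0)).continuousAt.continuousWithinAt)
      (by
        intro x hx
        have hx0 : x ≠ 0 := by have := hx.1; intro h; rw [h] at this; linarith
        have := Real.hasDerivAt_rpow_const (x := x) (p := 1-γ) (Or.inl hx0)
        simpa [show (1-γ)-1 = -γ by ring] using this)
  have hc0 : (0:ℝ) < c := lt_trans hk0 hc.1
  have hc2k : c ≤ 2 * k := by have := hc.2; linarith
  -- slope equation
  have hslope : ((k:ℝ)) ^ (1-γ) - ((k:ℝ)+1) ^ (1-γ) = (γ - 1) * c ^ (-γ) := by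
    have h1 : ((k:ℝ)+1) - (k:ℝ) = 1 := by ring
    rw [h1, div_one] at hceq
    nlinarith [hceq]
  rw [hslope]
  -- now: k^{-γ} ≤ 2^γ/(γ-1) * ((γ-1) * c^{-γ}) = 2^γ * c^{-γ}
  have hge : (2:ℝ) ^ (-γ) * (k:ℝ) ^ (-γ) ≤ c ^ (-γ) := by
    have h2k : ((2:ℝ) * k) ^ (-γ) = 2 ^ (-γ) * (k:ℝ) ^ (-γ) :=
      Real.mul_rpow (by norm_num) hk0.le
    rw [← h2k]
    exact Real.rpow_le_rpow_of_nonpos hc0 hc2k (by linarith)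
  have h2γ : (2:ℝ) ^ γ * (2:ℝ) ^ (-γ) = 1 := by
    rw [← Real.rpow_add (by norm_num)]; simp
  have h2pos : (0:ℝ) < (2:ℝ) ^ γ := Real.rpow_pos_of_pos (by norm_num) _
  have key : (k:ℝ) ^ (-γ) ≤ 2 ^ γ * c ^ (-γ) := by
    calc (k:ℝ) ^ (-γ) = 2 ^ γ * (2 ^ (-γ) * (k:ℝ) ^ (-γ)) := by
          rw [← mul_assoc, h2γ, one_mul]
      _ ≤ 2 ^ γ * c ^ (-γ) := by
          exact mul_le_mul_of_nonneg_left hge h2pos.le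
  have hγ1 : (0:ℝ) < γ - 1 := by linarith
  calc (k:ℝ) ^ (-γ) ≤ 2 ^ γ * c ^ (-γ) := key
    _ = 2 ^ γ / (γ - 1) * ((γ - 1) * c ^ (-γ)) := by field_simp


private lemma summable_shift_rpow {γ : ℝ} (hγ : 1 < γ) (m : ℕ) :
    Summable (fun j : ℕ => ((m+j : ℕ) : ℝ) ^ (-γ)) := by
  have h : Summable (fun n : ℕ => (n : ℝ) ^ (-γ)) :=
    Real.summable_nat_rpow.mpr (by linarith)
  exact h.comp_injective (add_right_injective m)

private lemma tail_upper {γ : ℝ} (hγ : 1 < γ) {m : ℕ} (hm : 1 ≤ m) :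
    ∑' j : ℕ, ((m+j : ℕ) : ℝ) ^ (-γ) ≤ 2 ^ γ / (γ - 1) * (m:ℝ) ^ (1-γ) := by
  set K := (2:ℝ) ^ γ / (γ - 1) with hK
  have hKpos : 0 < K := by
    apply div_pos (Real.rpow_pos_of_pos (by norm_num) _) (by linarith)
  apply Summable.tsum_le_of_sum_range_le (summable_shift_rpow hγ m)
  intro n
  have step : ∀ j ∈ Finset.range n, ((m+j : ℕ) : ℝ) ^ (-γ) ≤
      K * (((m+j:ℕ):ℝ) ^ (1-γ) - ((m+j+1:ℕ):ℝ) ^ (1-γ)) := by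
    intro j _
    have h := rpow_telescope hγ (k := m + j) (by omega)
    have hcast : ((m+j+1:ℕ):ℝ) = ((m+j:ℕ):ℝ) + 1 := by push_cast; ring
    rw [hcast]
    exact h
  calc ∑ j ∈ Finset.range n, ((m+j : ℕ) : ℝ) ^ (-γ)
      ≤ ∑ j ∈ Finset.range n, K * (((m+j:ℕ):ℝ) ^ (1-γ) - ((m+j+1:ℕ):ℝ) ^ (1-γ)) :=
        Finset.sum_le_sum step
    _ = K * (((m:ℕ):ℝ) ^ (1-γ) - ((m+n:ℕ):ℝ) ^ (1-γ)) := by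
        rw [← Finset.mul_sum]
        congr 1
        have := Finset.sum_range_sub' (fun j => ((m+j:ℕ):ℝ) ^ (1-γ)) n
        simpa [add_assoc] using this
    _ ≤ K * (m:ℝ) ^ (1-γ) := by
        have h0 : (0:ℝ) ≤ ((m+n:ℕ):ℝ) ^ (1-γ) := Real.rpow_nonneg (by positivity) _
        nlinarith [hKpos]

private lemma tail_lower {γ : ℝ} (hγ : 1 < γ) {m : ℕ} (hm : 1 ≤ m) :
    2 ^ (-γ) * (m:ℝ) ^ (1-γ) ≤ ∑' j : ℕ, ((m+j : ℕ) : ℝ) ^ (-γ) := by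
  have hm0 : (0:ℝ) < m := by exact_mod_cast hm
  have hsum := summable_shift_rpow hγ m
  have h1 : ∑ j ∈ Finset.range m, ((m+j : ℕ) : ℝ) ^ (-γ) ≤
      ∑' j : ℕ, ((m+j : ℕ) : ℝ) ^ (-γ) :=
    Summable.sum_le_tsum _ (fun i _ => Real.rpow_nonneg (by positivity) _) hsum
  refine le_trans ?_ h1
  have h2 : ∀ j ∈ Finset.range m, (2:ℝ)^(-γ) * (m:ℝ)^(-γ) ≤ ((m+j : ℕ) : ℝ) ^ (-γ) := by
    intro j hj
    have hjm : j < m := Finset.mem_range.mp hj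
    have hle : ((m+j:ℕ):ℝ) ≤ 2 * (m:ℝ) := by
      have : (m:ℝ) + (j:ℝ) ≤ 2 * m := by
        have : (j:ℝ) ≤ (m:ℝ) := by exact_mod_cast hjm.le
        linarith
      push_cast; linarith
    have hpos : (0:ℝ) < ((m+j:ℕ):ℝ) := by positivity
    have h3 := Real.rpow_le_rpow_of_nonpos hpos hle (by linarith : -γ ≤ 0)
    rw [Real.mul_rpow (by norm_num) hm0.le] at h3
    exact h3
  calc (2:ℝ) ^ (-γ) * (m:ℝ) ^ (1-γ)
      = (m:ℝ) * ((2:ℝ)^(-γ) * (m:ℝ)^(-γ)) := by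
        rw [show (1-γ) = 1 + (-γ) by ring, Real.rpow_add hm0, Real.rpow_one]; ring
    _ = ∑ _j ∈ Finset.range m, (2:ℝ)^(-γ) * (m:ℝ)^(-γ) := by
        rw [Finset.sum_const, Finset.card_range]; ring
    _ ≤ ∑ j ∈ Finset.range m, ((m+j : ℕ) : ℝ) ^ (-γ) := Finset.sum_le_sum h2
  

private def iciEquiv (m : ℕ) : ℕ ≃ (Set.Ici m : Set ℕ) where
  toFun := fun j => ⟨m + j, Set.mem_Ici.mpr (Nat.le_add_right m j)⟩
  invFun := fun i => i.1 - m
  left_inv := fun j => by simp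
  right_inv := fun i => Subtype.ext (Nat.add_sub_cancel' i.2)

/-- Example 4.5 (criterion part): for the birth-death chain with
`a_i = b_i = i^γ` (`i ≥ 1`), `a_0 = 0`, `b_0 = 1` and `γ > 1`, the reversible
probability measure satisfies `π_i = Z⁻¹ i^{−γ}` for `i ≥ 1`, and the rescaled
Cheeger constant `k^{(1/2)'}` is positive if and only if `γ ≥ 2`. -/
theorem stmt14 (γ : ℝ) (hγ : 1 < γ)
    (a b : ℕ → ℝ)
    (ha : ∀ i, a i = if i = 0 then 0 else (i : ℝ) ^ γ)
    (hb : ∀ i, b i = if i = 0 then 1 else (i : ℝ) ^ γ)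
    (π : ℕ → ℝ)
    (hπpos : ∀ i, 0 < π i) (hπsum : Summable π) (hπ1 : (∑' i, π i) = 1)
    (hdb : ∀ i, π i * b i = π (i + 1) * a (i + 1))
    (J : ℕ → ℕ → ℝ)
    (hJ : ∀ i j, J i j =
      if j = i + 1 then π i * b i / Real.sqrt (max (a i + b i) (a j + b j))
      else if i = j + 1 then π i * a i / Real.sqrt (max (a i + b i) (a j + b j))
      else 0)
    (flux πm : Set ℕ → ℝ≥0∞)
    (hflux : ∀ A, flux A = ∑' i : A, ∑' j : ↥Aᶜ, ENNReal.ofReal (J i j))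
    (hπm : ∀ A : Set ℕ, πm A = ∑' i : A, ENNReal.ofReal (π i))
    (k' : ℝ≥0∞)
    (hk' : k' = ⨅ A ∈ {A : Set ℕ | 0 < πm A ∧ πm A ≤ 1 / 2}, flux A / πm A) :
    (∃ Z : ℝ, 0 < Z ∧ ∀ i, 1 ≤ i → π i = (i : ℝ) ^ (-γ) / Z) ∧
    (0 < k' ↔ 2 ≤ γ) := by
  classical
  have hγ0 : (0:ℝ) < γ := by linarith
  set p1 := π 1 with hp1def
  have hp1 : 0 < p1 := hπpos 1
  -- π values
  have hπval : ∀ i : ℕ, 1 ≤ i → π i = (i:ℝ) ^ (-γ) * p1 := by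
    intro i hi
    induction i with
    | zero => omega
    | succ n ih =>
      rcases Nat.eq_zero_or_pos n with h0 | hn
      · subst h0; simp [hp1def]
      · have hstep := hdb n
        have hn0 : (0:ℝ) < (n:ℝ) := by exact_mod_cast hn
        have hn10 : (0:ℝ) < ((n+1:ℕ):ℝ) := by positivity
        rw [hb, ha, if_neg (by omega : ¬ n = 0), if_neg (by omega : ¬ n + 1 = 0)] at hstep
        rw [ih hn] at hstep
        have hne : ((n+1:ℕ):ℝ) ^ γ ≠ 0 := (Real.rpow_pos_of_pos hn10 γ).ne'
        have hcanc : (n:ℝ) ^ (-γ) * (n:ℝ) ^ γ = 1 := by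
          rw [← Real.rpow_add hn0]; simp
        have hinv : ((n+1:ℕ):ℝ) ^ (-γ) = (((n+1:ℕ):ℝ) ^ γ)⁻¹ := by
          rw [Real.rpow_neg hn10.le]
        have h2 : π (n+1) * ((n+1:ℕ):ℝ) ^ γ = p1 := by
          rw [← hstep]; linear_combination p1 * hcanc
        rw [hinv, inv_mul_eq_div, eq_div_iff hne]
        exact h2
  refine ⟨⟨p1⁻¹, inv_pos.mpr hp1, fun i hi => by rw [hπval i hi, div_eq_mul_inv, inv_inv]⟩, ?_⟩
  -- constants
  set K := (2:ℝ) ^ γ / (γ - 1) with hKdef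
  have hKpos : 0 < K := div_pos (Real.rpow_pos_of_pos (by norm_num) _) (by linarith)
  have hs2 : (0:ℝ) < Real.sqrt 2 := Real.sqrt_pos.mpr (by norm_num)
  -- tail sums
  set Tr : ℕ → ℝ := fun m => ∑' j : ℕ, π (m + j) with hTrdef
  have hsumsh : ∀ m : ℕ, Summable (fun j : ℕ => π (m + j)) :=
    fun m => hπsum.comp_injective (add_right_injective m)
  have hTr_eq : ∀ m : ℕ, 1 ≤ m → Tr m = (∑' j : ℕ, ((m+j:ℕ):ℝ) ^ (-γ)) * p1 := by
    intro m hm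
    rw [hTrdef]
    rw [← tsum_mul_right]
    exact tsum_congr fun j => by rw [hπval (m+j) (by omega)]
  have hTub : ∀ m : ℕ, 1 ≤ m → Tr m ≤ p1 * (K * (m:ℝ) ^ (1-γ)) := by
    intro m hm
    rw [hTr_eq m hm, mul_comm]
    exact mul_le_mul_of_nonneg_left (tail_upper hγ hm) hp1.le
  have hTlb : ∀ m : ℕ, 1 ≤ m → p1 * ((2:ℝ) ^ (-γ) * (m:ℝ) ^ (1-γ)) ≤ Tr m := by
    intro m hm
    rw [hTr_eq m hm, mul_comm (∑' j : ℕ, ((m+j:ℕ):ℝ) ^ (-γ)) p1]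
    exact mul_le_mul_of_nonneg_left (tail_lower hγ hm) hp1.le
  -- πm facts
  have hπm_mono : ∀ A B : Set ℕ, A ⊆ B → πm A ≤ πm B := by
    intro A B hAB
    rw [hπm, hπm, tsum_subtype A (fun i => ENNReal.ofReal (π i)),
      tsum_subtype B (fun i => ENNReal.ofReal (π i))]
    exact ENNReal.tsum_le_tsum fun i =>
      Set.indicator_le_indicator_of_subset hAB (fun _ => zero_le) i
  have hπmIci : ∀ m : ℕ, πm (Ici m) = ENNReal.ofReal (Tr m) := by
    intro m
    rw [hπm]
    rw [← Equiv.tsum_eq (iciEquiv m) (fun i => ENNReal.ofReal (π i))]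
    rw [hTrdef, ENNReal.ofReal_tsum_of_nonneg (fun j => (hπpos _).le) (hsumsh m)]
    exact tsum_congr fun j => rfl
  have hπmuniv : πm univ = 1 := by
    rw [hπm, tsum_univ (fun i => ENNReal.ofReal (π i)),
      ← ENNReal.ofReal_tsum_of_nonneg (fun i => (hπpos i).le) hπsum, hπ1, ENNReal.ofReal_one]
  have hπmadd : ∀ A : Set ℕ, πm A + πm Aᶜ = 1 := by
    intro A
    rw [hπm, hπm, tsum_subtype A (fun i => ENNReal.ofReal (π i)),
      tsum_subtype Aᶜ (fun i => ENNReal.ofReal (π i)), ← ENNReal.tsum_add]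
    have hpt : ∀ i : ℕ, A.indicator (fun i => ENNReal.ofReal (π i)) i
        + Aᶜ.indicator (fun i => ENNReal.ofReal (π i)) i = ENNReal.ofReal (π i) := by
      intro i
      rw [← Pi.add_apply, Set.indicator_self_add_compl]
    rw [tsum_congr hpt]
    rw [← ENNReal.ofReal_tsum_of_nonneg (fun i => (hπpos i).le) hπsum, hπ1, ENNReal.ofReal_one]
  have hπmpos : ∀ (A : Set ℕ) (i : ℕ), i ∈ A → 0 < πm A := by
    intro A i hi
    rw [hπm]
    exact lt_of_lt_of_le (ENNReal.ofReal_pos.mpr (hπpos i)) (ENNReal.le_tsum (a := (⟨i, hi⟩ : ↥A)))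
  -- flux facts
  have hfluxge : ∀ (A : Set ℕ) (i j : ℕ), i ∈ A → j ∈ Aᶜ →
      ENNReal.ofReal (J i j) ≤ flux A := by
    intro A i j hi hj
    rw [hflux]
    exact le_trans (ENNReal.le_tsum (⟨j, hj⟩ : ↥Aᶜ))
      (ENNReal.le_tsum (f := fun i : A => ∑' j : ↥Aᶜ, ENNReal.ofReal (J i j)) ⟨i, hi⟩)
  have hfluxIci : ∀ m : ℕ, 1 ≤ m → flux (Ici m) = ENNReal.ofReal (J m (m-1)) := by
    intro m hm
    rw [hflux]
    have hmem : m ∈ Ici m := mem_Ici.mpr le_rfl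
    have hmemc : (m-1) ∈ (Ici m)ᶜ := by
      simp only [mem_compl_iff, mem_Ici, not_le]; omega
    have inner : ∑' (j : ↥(Ici m)ᶜ), ENNReal.ofReal (J m j) = ENNReal.ofReal (J m (m-1)) := by
      apply tsum_eq_single (⟨m-1, hmemc⟩ : ↥(Ici m)ᶜ)
      intro j hj
      have hjlt : (j:ℕ) < m := by
        have := j.2; simpa only [mem_compl_iff, mem_Ici, not_le] using this
      have hjne : (j:ℕ) ≠ m - 1 := fun h => hj (Subtype.ext h)
      rw [hJ, if_neg (by omega), if_neg (by omega)]
      exact ENNReal.ofReal_zero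
    calc ∑' (i : ↥(Ici m)) (j : ↥(Ici m)ᶜ), ENNReal.ofReal (J i j)
        = ∑' (j : ↥(Ici m)ᶜ), ENNReal.ofReal (J (↑(⟨m, hmem⟩ : ↥(Ici m))) j) := by
          apply tsum_eq_single (⟨m, hmem⟩ : ↥(Ici m))
          intro i hi
          have him : m < (i:ℕ) := lt_of_le_of_ne i.2 (fun h => hi (Subtype.ext h.symm))
          have hz : ∀ j : ↥(Ici m)ᶜ, ENNReal.ofReal (J i j) = 0 := by
            intro j
            have hjlt : (j:ℕ) < m := by
              have := j.2; simpa only [mem_compl_iff, mem_Ici, not_le] using this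
            rw [hJ, if_neg (by omega), if_neg (by omega)]
            exact ENNReal.ofReal_zero
          rw [tsum_congr hz, tsum_zero]
      _ = ENNReal.ofReal (J m (m-1)) := inner
  -- J values
  have hJpos : ∀ k : ℕ, 0 < J k (k+1) := by
    intro k
    rw [hJ, if_pos rfl]
    have hbk : 0 < b k := by
      rw [hb]; split
      · norm_num
      · positivity
    have hmax : 0 < max (a k + b k) (a (k+1) + b (k+1)) := by
      have h1 : (0:ℝ) < a (k+1) + b (k+1) := by
        rw [ha, hb, if_neg (Nat.succ_ne_zero k), if_neg (Nat.succ_ne_zero k)]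
        positivity
      exact lt_max_of_lt_right h1
    exact div_pos (mul_pos (hπpos k) hbk) (Real.sqrt_pos.mpr hmax)
  have hJval : ∀ m : ℕ, 1 ≤ m → J m (m-1) = p1 / Real.sqrt 2 * (m:ℝ) ^ (-(γ/2)) := by
    intro m hm
    have hm0 : (0:ℝ) < (m:ℝ) := by exact_mod_cast hm
    rw [hJ, if_neg (by omega), if_pos (by omega)]
    have ham : a m = (m:ℝ)^γ := by rw [ha, if_neg (by omega)]
    have hbm : b m = (m:ℝ)^γ := by rw [hb, if_neg (by omega)]
    have hmax : max (a m + b m) (a (m-1) + b (m-1)) = 2 * (m:ℝ)^γ := by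
      rw [ham, hbm]
      rcases eq_or_lt_of_le hm with h1 | h2
      · have hm1 : m = 1 := h1.symm
        have hc : (m:ℝ) = 1 := by rw [hm1]; norm_num
        rw [show m - 1 = 0 by omega, ha 0, hb 0, if_pos rfl, if_pos rfl, hc,
          Real.one_rpow]
        norm_num
      · have hm1 : ¬ (m - 1 = 0) := by omega
        rw [ha, hb, if_neg hm1, if_neg hm1]
        have hle : ((m-1:ℕ):ℝ)^γ ≤ (m:ℝ)^γ :=
          Real.rpow_le_rpow (Nat.cast_nonneg _)
            (by exact_mod_cast Nat.sub_le m 1) hγ0.le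
        rw [max_eq_left (by linarith)]
        ring
    rw [hmax, hπval m hm, ham]
    have hcanc : (m:ℝ)^(-γ) * (m:ℝ)^γ = 1 := by rw [← Real.rpow_add hm0]; simp
    have hsqrt : Real.sqrt (2 * (m:ℝ)^γ) = Real.sqrt 2 * (m:ℝ)^(γ/2) := by
      rw [Real.sqrt_mul (by norm_num), Real.sqrt_eq_rpow ((m:ℝ)^γ),
        ← Real.rpow_mul hm0.le, show γ * (1/2:ℝ) = γ/2 by ring]
    rw [hsqrt]
    have hneg : (m:ℝ)^(-(γ/2)) = ((m:ℝ)^(γ/2))⁻¹ := by rw [Real.rpow_neg hm0.le]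
    calc (m:ℝ)^(-γ) * p1 * (m:ℝ)^γ / (Real.sqrt 2 * (m:ℝ)^(γ/2))
        = p1 / (Real.sqrt 2 * (m:ℝ)^(γ/2)) := by
          rw [mul_comm ((m:ℝ)^(-γ)) p1, mul_assoc, hcanc, mul_one]
      _ = p1 / Real.sqrt 2 * (m:ℝ)^(-(γ/2)) := by
          rw [hneg, div_mul_eq_div_div, div_eq_mul_inv (p1 / Real.sqrt 2)]
  have hhalf : ENNReal.ofReal (1/2 : ℝ) = 1/2 := by
    rw [ENNReal.ofReal_div_of_pos (by norm_num), ENNReal.ofReal_one, ENNReal.ofReal_ofNat]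
  constructor
  · -- 0 < k' → 2 ≤ γ
    intro hkpos
    by_contra h2
    push_neg at h2
    set D := (2:ℝ)^γ / Real.sqrt 2 with hDdef
    have hratio : ∀ m : ℕ, 1 ≤ m →
        (p1 / Real.sqrt 2 * (m:ℝ)^(-(γ/2))) / (p1 * ((2:ℝ)^(-γ) * (m:ℝ)^(1-γ)))
          = D * (m:ℝ)^(γ/2-1) := by
      intro m hm
      have hm0 : (0:ℝ) < m := by exact_mod_cast hm
      have hx : (m:ℝ)^(-(γ/2)) = (m:ℝ)^(γ/2-1) * (m:ℝ)^(1-γ) := by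
        rw [← Real.rpow_add hm0, show γ/2-1+(1-γ) = -(γ/2) by ring]
      have h2γ : ((2:ℝ)^(-γ)) = ((2:ℝ)^γ)⁻¹ := by rw [Real.rpow_neg (by norm_num)]
      have hY : (m:ℝ)^(1-γ) ≠ 0 := (Real.rpow_pos_of_pos hm0 _).ne'
      have h2g0 : ((2:ℝ)^γ) ≠ 0 := (Real.rpow_pos_of_pos (by norm_num) _).ne'
      rw [hx, h2γ, hDdef]
      field_simp
    have htend0 : Filter.Tendsto (fun m : ℕ => D * (m:ℝ)^(γ/2-1))
        Filter.atTop (nhds 0) := by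
      have h1 : Filter.Tendsto (fun x : ℝ => x^(-(1-γ/2))) Filter.atTop (nhds 0) :=
        tendsto_rpow_neg_atTop (by linarith)
      have h2 : Filter.Tendsto (fun m : ℕ => ((m:ℝ))^(γ/2-1)) Filter.atTop (nhds 0) := by
        have := h1.comp (tendsto_natCast_atTop_atTop (R := ℝ))
        simpa [Function.comp_def, show -(1-γ/2) = γ/2-1 by ring] using this
      simpa using h2.const_mul D
    have htendhalf : Filter.Tendsto (fun m : ℕ => p1 * (K * (m:ℝ)^(1-γ)))
        Filter.atTop (nhds 0) := by
      have h1 : Filter.Tendsto (fun x : ℝ => x^(-(γ-1))) Filter.atTop (nhds 0) :=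
        tendsto_rpow_neg_atTop (by linarith)
      have h2 : Filter.Tendsto (fun m : ℕ => ((m:ℝ))^(1-γ)) Filter.atTop (nhds 0) := by
        have := h1.comp (tendsto_natCast_atTop_atTop (R := ℝ))
        simpa [Function.comp_def, show -(γ-1) = 1-γ by ring] using this
      have := (h2.const_mul K).const_mul p1
      simpa [mul_assoc] using this
    have hev : ∀ᶠ m : ℕ in Filter.atTop, k' ≤ ENNReal.ofReal (D * (m:ℝ)^(γ/2-1)) := by
      filter_upwards [Filter.eventually_ge_atTop 1,
        htendhalf.eventually_lt_const (show (0:ℝ) < 1/2 by norm_num)] with m hm1 hm2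
      have hIciS : (Ici m) ∈ {A : Set ℕ | 0 < πm A ∧ πm A ≤ 1/2} := by
        refine ⟨hπmpos _ m (mem_Ici.mpr le_rfl), ?_⟩
        rw [hπmIci m, ← hhalf]
        exact ENNReal.ofReal_le_ofReal (le_trans (hTub m hm1) hm2.le)
      have hk'le : k' ≤ flux (Ici m) / πm (Ici m) := by
        rw [hk']; exact iInf₂_le (Ici m) hIciS
      refine le_trans hk'le ?_
      have hm0 : (0:ℝ) < m := by exact_mod_cast hm1
      have hdenpos : (0:ℝ) < p1 * ((2:ℝ)^(-γ) * (m:ℝ)^(1-γ)) :=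
        mul_pos hp1 (mul_pos (Real.rpow_pos_of_pos (by norm_num) _)
          (Real.rpow_pos_of_pos hm0 _))
      rw [hfluxIci m hm1, hJval m hm1, hπmIci m]
      calc ENNReal.ofReal (p1 / Real.sqrt 2 * (m:ℝ)^(-(γ/2))) / ENNReal.ofReal (Tr m)
          ≤ ENNReal.ofReal (p1 / Real.sqrt 2 * (m:ℝ)^(-(γ/2)))
              / ENNReal.ofReal (p1 * ((2:ℝ)^(-γ) * (m:ℝ)^(1-γ))) :=
            ENNReal.div_le_div le_rfl (ENNReal.ofReal_le_ofReal (hTlb m hm1))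
        _ = ENNReal.ofReal ((p1 / Real.sqrt 2 * (m:ℝ)^(-(γ/2)))
              / (p1 * ((2:ℝ)^(-γ) * (m:ℝ)^(1-γ)))) :=
            (ENNReal.ofReal_div_of_pos hdenpos).symm
        _ = ENNReal.ofReal (D * (m:ℝ)^(γ/2-1)) := by rw [hratio m hm1]
    have htendE : Filter.Tendsto (fun m : ℕ => ENNReal.ofReal (D * (m:ℝ)^(γ/2-1)))
        Filter.atTop (nhds 0) := by
      simpa using ENNReal.tendsto_ofReal htend0
    have hk0 : k' ≤ 0 := ge_of_tendsto htendE hev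
    exact hkpos.not_ge hk0
  · -- 2 ≤ γ → 0 < k'
    intro hγ2
    set ε₁ : ℝ := (Real.sqrt 2 * K)⁻¹ with hε₁def
    have hε₁pos : 0 < ε₁ := by positivity
    set N₀ : ℕ := Nat.ceil ((2*p1*K)^((γ-1)⁻¹)) + 1 with hN₀def
    have hN₀ne : (Finset.range N₀).Nonempty := ⟨0, Finset.mem_range.mpr (by omega)⟩
    set δ : ℝ := (Finset.range N₀).inf' hN₀ne (fun k => J k (k+1)) with hδdef
    have hδpos : 0 < δ := by
      rw [hδdef, Finset.lt_inf'_iff]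
      exact fun k _ => hJpos k
    set ε : ℝ≥0∞ := min (ENNReal.ofReal ε₁) (ENNReal.ofReal δ) with hεdef
    have hεpos : 0 < ε :=
      lt_min (ENNReal.ofReal_pos.mpr hε₁pos) (ENNReal.ofReal_pos.mpr hδpos)
    have hεle : ε ≤ k' := by
      rw [hk']
      refine le_iInf₂ ?_
      intro A hA
      obtain ⟨hA1, hA2⟩ := hA
      have hAne : ∃ x, x ∈ A := by
        by_contra h
        push_neg at h
        have hAe : A = ∅ := eq_empty_iff_forall_notMem.mpr h
        rw [hAe, hπm] at hA1
        simp [tsum_empty] at hA1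
      set m := Nat.find hAne with hmdef
      have hmA : m ∈ A := Nat.find_spec hAne
      have hAsub : A ⊆ Ici m := fun x hx => Nat.find_min' hAne hx
      rcases Nat.eq_zero_or_pos m with hm0 | hm1
      · -- 0 ∈ A
        have h0A : 0 ∈ A := hm0 ▸ hmA
        have hAcne : ∃ x, x ∈ Aᶜ := by
          by_contra h
          push_neg at h
          have hAc : Aᶜ = ∅ := eq_empty_iff_forall_notMem.mpr h
          have hem : πm ∅ = 0 := by rw [hπm]; exact tsum_empty
          have h1 : πm A = 1 := by
            have hadd := hπmadd A
            rwa [hAc, hem, add_zero] at hadd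
          rw [h1] at hA2
          have hlt : (1/2:ℝ≥0∞) < 1 := ENNReal.half_lt_self one_ne_zero one_ne_top
          exact absurd hA2 hlt.not_ge
        set n := Nat.find hAcne with hndef
        have hnc : n ∈ Aᶜ := Nat.find_spec hAcne
        have hn1 : 1 ≤ n := by
          rcases Nat.eq_zero_or_pos n with h | h
          · exfalso; rw [h] at hnc; exact hnc h0A
          · exact h
        have hn1A : n - 1 ∈ A := by
          by_contra hc
          exact Nat.find_min hAcne (show n - 1 < n by omega) hc
        have hAcsub : Aᶜ ⊆ Ici n := fun x hx => Nat.find_min' hAcne hx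
        have hhalfle : (1/2 : ℝ≥0∞) ≤ πm Aᶜ := by
          have hadd := hπmadd A
          have h1 : (1:ℝ≥0∞) ≤ 1/2 + πm Aᶜ := by
            calc (1:ℝ≥0∞) = πm A + πm Aᶜ := hadd.symm
              _ ≤ 1/2 + πm Aᶜ := add_le_add_left hA2 _
          have h2 : (1/2:ℝ≥0∞) + 1/2 ≤ 1/2 + πm Aᶜ := by
            rw [ENNReal.add_halves]; exact h1
          exact (ENNReal.add_le_add_iff_left (by norm_num)).mp h2
        have hn0 : (0:ℝ) < n := by exact_mod_cast hn1
        have hnle : n < N₀ := by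
          have hchain : (1/2 : ℝ≥0∞) ≤ ENNReal.ofReal (p1 * (K * (n:ℝ)^(1-γ))) :=
            le_trans hhalfle (le_trans (hπm_mono _ _ hAcsub)
              (by rw [hπmIci n]; exact ENNReal.ofReal_le_ofReal (hTub n hn1)))
          rw [← hhalf] at hchain
          have hnn : (0:ℝ) ≤ p1 * (K * (n:ℝ)^(1-γ)) :=
            (mul_pos hp1 (mul_pos hKpos (Real.rpow_pos_of_pos hn0 _))).le
          have hreal : (1/2:ℝ) ≤ p1 * (K * (n:ℝ)^(1-γ)) :=
            (ENNReal.ofReal_le_ofReal_iff hnn).mp hchain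
          have hcancel : (n:ℝ)^(1-γ) * (n:ℝ)^(γ-1) = 1 := by
            rw [← Real.rpow_add hn0, show (1-γ)+(γ-1) = 0 by ring, Real.rpow_zero]
          have hpow : (n:ℝ)^(γ-1) ≤ 2*p1*K := by
            have h := mul_le_mul_of_nonneg_right hreal
              (Real.rpow_nonneg hn0.le (γ-1))
            have hR : p1 * (K * (n:ℝ)^(1-γ)) * (n:ℝ)^(γ-1) = p1*K := by
              calc p1 * (K * (n:ℝ)^(1-γ)) * (n:ℝ)^(γ-1)
                  = p1*K*((n:ℝ)^(1-γ) * (n:ℝ)^(γ-1)) := by ring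
                _ = p1*K := by rw [hcancel, mul_one]
            rw [hR] at h
            linarith
          have hcast : (n:ℝ) ≤ (2*p1*K)^((γ-1)⁻¹) := by
            have h0 : (0:ℝ) ≤ (n:ℝ)^(γ-1) := Real.rpow_nonneg hn0.le _
            have h3 := Real.rpow_le_rpow h0 hpow
              (inv_pos.mpr (by linarith : (0:ℝ) < γ-1)).le
            rwa [← Real.rpow_mul hn0.le, mul_inv_cancel₀ (by linarith : γ-1 ≠ 0),
              Real.rpow_one] at h3
          have hle2 : (n:ℝ) ≤ (Nat.ceil ((2*p1*K)^((γ-1)⁻¹)) : ℝ) :=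
            le_trans hcast (Nat.le_ceil _)
          have hn' : n ≤ Nat.ceil ((2*p1*K)^((γ-1)⁻¹)) := by exact_mod_cast hle2
          omega
        have hδle : ENNReal.ofReal δ ≤ flux A := by
          have hmem : n - 1 ∈ Finset.range N₀ := Finset.mem_range.mpr (by omega)
          have h1 : δ ≤ J (n-1) ((n-1)+1) := Finset.inf'_le _ hmem
          rw [show n - 1 + 1 = n by omega] at h1
          exact le_trans (ENNReal.ofReal_le_ofReal h1) (hfluxge A (n-1) n hn1A hnc)
        calc ε ≤ ENNReal.ofReal δ := min_le_right _ _
          _ = ENNReal.ofReal δ / 1 := by simp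
          _ ≤ flux A / πm A :=
              ENNReal.div_le_div hδle (le_trans hA2 (by norm_num))
      · -- m ≥ 1
        have hm1A : m - 1 ∈ Aᶜ := fun h =>
          Nat.find_min hAne (show m - 1 < m by omega) h
        have hnum : ENNReal.ofReal (p1 / Real.sqrt 2 * (m:ℝ)^(-(γ/2))) ≤ flux A := by
          rw [← hJval m hm1]
          exact hfluxge A m (m-1) hmA hm1A
        have hden : πm A ≤ ENNReal.ofReal (p1 * (K * (m:ℝ)^(1-γ))) :=
          le_trans (hπm_mono _ _ hAsub)
            (by rw [hπmIci m]; exact ENNReal.ofReal_le_ofReal (hTub m hm1))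
        have hm0 : (0:ℝ) < m := by exact_mod_cast hm1
        have hdenpos : (0:ℝ) < p1 * (K * (m:ℝ)^(1-γ)) :=
          mul_pos hp1 (mul_pos hKpos (Real.rpow_pos_of_pos hm0 _))
        calc ε ≤ ENNReal.ofReal ε₁ := min_le_left _ _
          _ ≤ ENNReal.ofReal ((p1 / Real.sqrt 2 * (m:ℝ)^(-(γ/2)))
                / (p1 * (K * (m:ℝ)^(1-γ)))) := by
              apply ENNReal.ofReal_le_ofReal
              have hx : (m:ℝ)^(-(γ/2)) = (m:ℝ)^(γ/2-1) * (m:ℝ)^(1-γ) := by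
                rw [← Real.rpow_add hm0, show γ/2-1+(1-γ) = -(γ/2) by ring]
              have hY : (m:ℝ)^(1-γ) ≠ 0 := (Real.rpow_pos_of_pos hm0 _).ne'
              have heqr : (p1 / Real.sqrt 2 * (m:ℝ)^(-(γ/2)))
                  / (p1 * (K * (m:ℝ)^(1-γ))) = ε₁ * (m:ℝ)^(γ/2-1) := by
                rw [hx, hε₁def]
                field_simp
              rw [heqr]
              have hge1 : (1:ℝ) ≤ (m:ℝ)^(γ/2-1) :=
                Real.one_le_rpow (by exact_mod_cast hm1) (by linarith)
              nlinarith [hε₁pos, hge1]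
          _ ≤ flux A / πm A := by
              rw [ENNReal.ofReal_div_of_pos hdenpos]
              exact ENNReal.div_le_div hnum hden
    exact lt_of_lt_of_le hεpos hεle
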